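/- If U and A are infinite matrices such that UA is defined, V is a row finite infinite matrix with VU defined and (VU) equal to the identity matrix, and a is an infinite column vector satisfying (UA)a = Ub (with Ub defined), then Aa = b, provided Aa is defined. More precisely: under these hypotheses, if a solves (UA)v = Ub then a solves Av = b. -/

import Mathlib

open Set

def ProdDef {F : Type*} [Field F] (A B : ℕ → ℕ → F) : Prop :=
  ∀ i k, {j | A i j * B j k ≠ 0}.Finite

noncomputable def mmul {F : Type*} [Field F] (A B : ℕ → ℕ → F) : ℕ → ℕ → F :=
  fun i k => ∑ᶠ j, A i j * B j k

def RowFin {F : Type*} [Field F] (A : ℕ → ℕ → F) : Prop := ∀ i, {j | A i j ≠ 0}.Finite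

def ColFin {F : Type*} [Field F] (A : ℕ → ℕ → F) : Prop := ∀ j, {i | A i j ≠ 0}.Finite

/-- A family of vectors `V j`, summable iff each coordinate has finite support over `j`. -/
def Summab {F : Type*} [Field F] (V : ℕ → ℕ → F) : Prop := ∀ i, {j | V j i ≠ 0}.Finite

/-- Condition (D): the family of rank-one matrices `A_{*j} b_{jk} C_{k*}` is summable. -/
def CondD {F : Type*} [Field F] (A B C : ℕ → ℕ → F) : Prop :=
  ∀ i l, {p : ℕ × ℕ | A i p.1 * B p.1 p.2 * C p.2 l ≠ 0}.Finite

/-- Matrix-vector product definedness. -/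
def MVDef {F : Type*} [Field F] (X : ℕ → ℕ → F) (v : ℕ → F) : Prop :=
  ∀ i, {j | X i j * v j ≠ 0}.Finite

noncomputable def mvmul {F : Type*} [Field F] (X : ℕ → ℕ → F) (v : ℕ → F) : ℕ → F :=
  fun i => ∑ᶠ j, X i j * v j

/-- Auxiliary: support of a "row-finite times pointwise-finite" double family is finite. -/
lemma finPair {F : Type*} [Field F] (c : ℕ → F) (g : ℕ → ℕ → F)
    (hc : {k | c k ≠ 0}.Finite) (hg : ∀ k, {j | g k j ≠ 0}.Finite) :
    (Function.support fun p : ℕ × ℕ => c p.1 * g p.1 p.2).Finite := by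
  apply Set.Finite.subset (Set.Finite.biUnion hc
    (fun k _ => (hg k).image (fun j => ((k, j) : ℕ × ℕ))))
  intro p hp
  simp only [Function.mem_support] at hp
  have h1 : c p.1 ≠ 0 := fun h => hp (by simp [h])
  have h2 : g p.1 p.2 ≠ 0 := fun h => hp (by simp [h])
  exact Set.mem_biUnion h1 ⟨p.2, h2, rfl⟩

/-- Auxiliary: swapping a finitely supported double finsum. -/
lemma finsumSwap {F : Type*} [Field F] (f : ℕ → ℕ → F)
    (h : (Function.support fun p : ℕ × ℕ => f p.1 p.2).Finite) :
    ∑ᶠ i, ∑ᶠ j, f i j = ∑ᶠ j, ∑ᶠ i, f i j := by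
  have h2 : (Function.support fun p : ℕ × ℕ => f p.2 p.1).Finite := by
    apply (h.image Prod.swap).subset
    intro p hp
    exact ⟨p.swap, hp, by simp⟩
  rw [← finsum_curry _ h, ← finsum_curry _ h2]
  exact (finsum_comp_equiv (Equiv.prodComm ℕ ℕ) (f := fun p : ℕ × ℕ => f p.1 p.2)).symm

theorem stmt19 {F : Type*} [Field F] (U A V : ℕ → ℕ → F) (a b : ℕ → F)
    (hUA : ProdDef U A) (hV : RowFin V) (hVU : ProdDef V U)
    (hI : mmul V U = fun i j => if i = j then (1 : F) else 0)
    (hUb : MVDef U b) (hUAa : MVDef (mmul U A) a)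
    (hsol : mvmul (mmul U A) a = mvmul U b)
    (hAa : MVDef A a) :
    mvmul A a = b := by
  funext i
  -- generic: V * (X w) = ((V X) applied rowwise) when each row of X w is fin. supported
  have key : ∀ (X : ℕ → ℕ → F) (w : ℕ → F), MVDef X w →
      ∑ᶠ k, V i k * mvmul X w k = ∑ᶠ j, (∑ᶠ k, V i k * X k j) * w j := by
    intro X w hXw
    have hfin := finPair (V i) (fun k j => X k j * w j) (hV i) hXw
    calc ∑ᶠ k, V i k * mvmul X w k
        = ∑ᶠ k, ∑ᶠ j, V i k * (X k j * w j) := by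
          simp only [mvmul]
          exact finsum_congr fun k => mul_finsum _ _
      _ = ∑ᶠ j, ∑ᶠ k, V i k * (X k j * w j) := finsumSwap _ hfin
      _ = ∑ᶠ j, (∑ᶠ k, V i k * X k j) * w j := by
          refine finsum_congr fun j => ?_
          rw [finsum_mul _ _]
          exact finsum_congr fun k => (mul_assoc _ _ _).symm
  -- b side
  have hb : ∑ᶠ k, V i k * mvmul U b k = b i := by
    rw [key U b hUb]
    have : ∀ j, (∑ᶠ k, V i k * U k j) * b j = (if i = j then (1:F) else 0) * b j := by
      intro j
      have := congrFun (congrFun hI i) j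
      rw [show (∑ᶠ k, V i k * U k j) = mmul V U i j from rfl, this]
    rw [finsum_congr this]
    rw [finsum_eq_single _ i (fun j hj => by simp [Ne.symm hj])]
    simp
  -- assoc: (V(UA)) i j = A i j
  have hassoc : ∀ j, (∑ᶠ k, V i k * mmul U A k j) = A i j := by
    intro j
    have hfin := finPair (V i) (fun k l => U k l * A l j) (hV i) (fun k => hUA k j)
    calc ∑ᶠ k, V i k * mmul U A k j
        = ∑ᶠ k, ∑ᶠ l, V i k * (U k l * A l j) := by
          simp only [mmul]
          exact finsum_congr fun k => mul_finsum _ _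
      _ = ∑ᶠ l, ∑ᶠ k, V i k * (U k l * A l j) := finsumSwap _ hfin
      _ = ∑ᶠ l, (∑ᶠ k, V i k * U k l) * A l j := by
          refine finsum_congr fun l => ?_
          rw [finsum_mul _ _]
          exact finsum_congr fun k => (mul_assoc _ _ _).symm
      _ = ∑ᶠ l, (if i = l then (1:F) else 0) * A l j := by
          refine finsum_congr fun l => ?_
          have := congrFun (congrFun hI i) l
          rw [show (∑ᶠ k, V i k * U k l) = mmul V U i l from rfl, this]
      _ = A i j := by
          rw [finsum_eq_single _ i (fun l hl => by simp [Ne.symm hl])]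
          simp
  -- a side
  have ha : ∑ᶠ k, V i k * mvmul (mmul U A) a k = mvmul A a i := by
    rw [key (mmul U A) a hUAa]
    exact finsum_congr fun j => by rw [hassoc j]
  rw [show mvmul A a i = ∑ᶠ k, V i k * mvmul (mmul U A) a k from ha.symm, hsol, hb]
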